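/- arXiv:1807.09058 — 2 statements merged into one kernel-verified Lean document; each statement's English description precedes it below -/
import Mathlib

section
/- The matrix G = I + Y/(λ-ξ) + Z/(λ-ξ*), where Y = (2iβ/|c|^2)[[c2 c2*, -c1 c2*],[-c1* c2, c1 c1*]] and Z = (-2iβ/|c|^2)[[c1 c1*, c1 c2*],[c1* c2, c2 c2*]], has eigenvalues (λ-ξ)/(λ-ξ*) and (λ-ξ*)/(λ-ξ), with ξ = α+iβ, β > 0. -/
open Matrix Complex

lemma aux_det (a b P Q u v μ S : ℂ) (ha : a ≠ 0) (hb : b ≠ 0) (hs : S ≠ 0)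
    (hPQ : P + Q = S) (huv : u * v = P * Q) :
    (μ - (1 + ((b - a)/S * Q)/a + (-((b - a)/S) * P)/b)) *
      (μ - (1 + ((b - a)/S * P)/a + (-((b - a)/S) * Q)/b)) -
      ((-((b - a)/S * u))/a + (-((b - a)/S) * u)/b) *
      ((-((b - a)/S * v))/a + (-((b - a)/S) * v)/b)
    = (μ - a/b) * (μ - b/a) := by
  have hQ : Q = S - P := by linear_combination hPQ
  subst hQ
  field_simp
  ring_nf
  linear_combination (- S^2*a*b^5 + 2*S^2*a^3*b^3 - S^2*a^5*b + (b * a ^ 5 * S ^ 2 + 2 * b ^ 2 * a ^ 2 - 2 * b ^ 3 * a ^ 3 * S ^ 2 - b ^ 4 + b ^ 5 * a * S ^ 2 - a ^ 4)) * huv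

/-- The matrix `G = I + Y/(λ-ξ) + Z/(λ-ξ*)` has eigenvalues `(λ-ξ)/(λ-ξ*)` and
`(λ-ξ*)/(λ-ξ)`. -/
theorem stmt_3 (α β : ℝ) (hβ : 0 < β) (c1 c2 : ℂ) (h1 : c1 ≠ 0) (h2 : c2 ≠ 0)
    (ξ : ℂ) (hξ : ξ = (α : ℂ) + (β : ℂ) * Complex.I)
    (lam : ℂ) (hl1 : lam ≠ ξ) (hl2 : lam ≠ (starRingEnd ℂ) ξ)
    (Y Z G : Matrix (Fin 2) (Fin 2) ℂ)
    (hY : Y = ((2 * Complex.I * (β : ℂ)) / ((‖c1‖ ^ 2 + ‖c2‖ ^ 2 : ℝ) : ℂ)) •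
      !![c2 * (starRingEnd ℂ) c2, -(c1 * (starRingEnd ℂ) c2);
         -((starRingEnd ℂ) c1 * c2), c1 * (starRingEnd ℂ) c1])
    (hZ : Z = (-(2 * Complex.I * (β : ℂ)) / ((‖c1‖ ^ 2 + ‖c2‖ ^ 2 : ℝ) : ℂ)) •
      !![c1 * (starRingEnd ℂ) c1, c1 * (starRingEnd ℂ) c2;
         (starRingEnd ℂ) c1 * c2, c2 * (starRingEnd ℂ) c2])
    (hG : G = 1 + (lam - ξ)⁻¹ • Y + (lam - (starRingEnd ℂ) ξ)⁻¹ • Z) :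
    spectrum ℂ G =
      {(lam - ξ) / (lam - (starRingEnd ℂ) ξ), (lam - (starRingEnd ℂ) ξ) / (lam - ξ)} := by
  have ha : lam - ξ ≠ 0 := sub_ne_zero.mpr hl1
  have hb : lam - (starRingEnd ℂ) ξ ≠ 0 := sub_ne_zero.mpr hl2
  have hs : ((‖c1‖ ^ 2 + ‖c2‖ ^ 2 : ℝ) : ℂ) ≠ 0 := by
    have h1' : 0 < ‖c1‖ := norm_pos_iff.mpr h1
    have : (0:ℝ) < ‖c1‖ ^ 2 + ‖c2‖ ^ 2 := by nlinarith [sq_nonneg ‖c2‖]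
    exact_mod_cast this.ne'
  have hd : (2 * Complex.I * (β : ℂ)) = (lam - (starRingEnd ℂ) ξ) - (lam - ξ) := by
    rw [hξ]; simp [Complex.conj_ofReal, Complex.conj_I]; ring
  have hPQ : c1 * (starRingEnd ℂ) c1 + c2 * (starRingEnd ℂ) c2
      = ((‖c1‖ ^ 2 + ‖c2‖ ^ 2 : ℝ) : ℂ) := by
    rw [Complex.mul_conj, Complex.mul_conj]
    push_cast
    rw [Complex.normSq_eq_norm_sq, Complex.normSq_eq_norm_sq]
    push_cast
    ring
  have huv : (c1 * (starRingEnd ℂ) c2) * ((starRingEnd ℂ) c1 * c2)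
      = (c1 * (starRingEnd ℂ) c1) * (c2 * (starRingEnd ℂ) c2) := by ring
  ext μ
  simp only [Set.mem_insert_iff, Set.mem_singleton_iff]
  rw [spectrum.mem_iff, Matrix.isUnit_iff_isUnit_det]
  have hdet : ((algebraMap ℂ (Matrix (Fin 2) (Fin 2) ℂ)) μ - G).det
      = (μ - (lam - ξ)/(lam - (starRingEnd ℂ) ξ)) *
        (μ - (lam - (starRingEnd ℂ) ξ)/(lam - ξ)) := by
    rw [hG, hY, hZ, hd, Matrix.det_fin_two]
    simp only [Matrix.sub_apply, Matrix.add_apply, Matrix.smul_apply, Matrix.one_apply,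
      Matrix.algebraMap_matrix_apply, Matrix.cons_val', Matrix.cons_val_zero,
      Matrix.cons_val_one, Matrix.head_cons, Matrix.head_fin_const, Matrix.empty_val',
      Matrix.cons_val_fin_one, Matrix.of_apply, smul_eq_mul, Algebra.algebraMap_self_apply, if_true, if_false,
      Fin.zero_eq_one_iff, Fin.one_eq_zero_iff, Nat.succ_ne_self, ite_true, ite_false,
      OfNat.ofNat_ne_one, OfNat.one_ne_ofNat, reduceIte]
    linear_combination aux_det (lam - ξ) (lam - (starRingEnd ℂ) ξ)
      (c1 * (starRingEnd ℂ) c1) (c2 * (starRingEnd ℂ) c2)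
      (c1 * (starRingEnd ℂ) c2) ((starRingEnd ℂ) c1 * c2) μ
      ((‖c1‖ ^ 2 + ‖c2‖ ^ 2 : ℝ) : ℂ) ha hb hs hPQ huv
  rw [hdet]
  simp only [isUnit_iff_ne_zero, not_ne_iff, mul_eq_zero, sub_eq_zero]
end

section
/- For α = 0 and β > 0, the quartic polynomial in τ given by 16β⁶τ⁴ + (8β⁴χ² - 72β³χ + 108β²)τ² + (β²χ⁴ - 2βχ³) (the discriminant condition for the critical-point cubic 2τλ³ + χλ² + 2β²τλ + (β²χ - 2β) = 0) has a double root in τ² precisely when (χ,τ) = (9/(4β), ±3√3/(8β²)) among points with τ ≠ 0. -/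
/-- For `α = 0`, `β > 0`, the quartic in `τ` (quadratic in `τ²`)
`16β⁶τ⁴ + (8β⁴χ² - 72β³χ + 108β²)τ² + (β²χ⁴ - 2βχ³)` has a double root in `τ²`
(with a nonzero real root `τ`) precisely when `(χ,τ) = (9/(4β), ±3√3/(8β²))`. -/
theorem stmt_10 (β : ℝ) (hβ : 0 < β) (χ τ : ℝ) (hχ : 0 < χ) (hτ : τ ≠ 0) :
    ((8 * β ^ 4 * χ ^ 2 - 72 * β ^ 3 * χ + 108 * β ^ 2) ^ 2
        - 4 * (16 * β ^ 6) * (β ^ 2 * χ ^ 4 - 2 * β * χ ^ 3) = 0 ∧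
      16 * β ^ 6 * τ ^ 4 + (8 * β ^ 4 * χ ^ 2 - 72 * β ^ 3 * χ + 108 * β ^ 2) * τ ^ 2
        + (β ^ 2 * χ ^ 4 - 2 * β * χ ^ 3) = 0)
    ↔ (χ = 9 / (4 * β) ∧
        (τ = 3 * Real.sqrt 3 / (8 * β ^ 2) ∨ τ = -(3 * Real.sqrt 3 / (8 * β ^ 2)))) := by
  have hβ0 : β ≠ 0 := ne_of_gt hβ
  have hs : Real.sqrt 3 ^ 2 = 3 := Real.sq_sqrt (by norm_num)
  have hs0 : (0:ℝ) ≤ Real.sqrt 3 := Real.sqrt_nonneg 3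
  constructor
  · rintro ⟨h1, h2⟩
    -- discriminant = -16β⁴(4βχ-9)³
    have hf : (16 * β ^ 4) * (4 * β * χ - 9) ^ 3 = 0 := by linear_combination -h1
    have hcube : (4 * β * χ - 9) ^ 3 = 0 := by
      rcases mul_eq_zero.mp hf with h | h
      · exact absurd h (by positivity)
      · exact h
    have hchi : 4 * β * χ - 9 = 0 := pow_eq_zero_iff (by norm_num) |>.mp hcube
    have hχ9 : χ = 9 / (4 * β) := by field_simp; linarith
    refine ⟨hχ9, ?_⟩
    subst hχ9
    -- now h2 ⇒ (4β³τ² - 27/(16β))² = 0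
    have hsq : (64 * β ^ 4 * τ ^ 2 - 27) ^ 2 = 0 := by
      have hbig : (4096 * β ^ 8) * (64 * β ^ 4 * τ ^ 2 - 27) ^ 2 = 0 := by
        field_simp at h2
        linear_combination (4096 * β ^ 8) * h2
      rcases mul_eq_zero.mp hbig with h | h
      · exact absurd h (by positivity)
      · exact h
    have hτ2 : 64 * β ^ 4 * τ ^ 2 - 27 = 0 := by
      exact pow_eq_zero_iff (by norm_num) |>.mp hsq
    have hτsq : τ ^ 2 = 27 / (64 * β ^ 4) := by
      field_simp
      linarith
    have ha2 : (3 * Real.sqrt 3 / (8 * β ^ 2)) ^ 2 = 27 / (64 * β ^ 4) := by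
      field_simp
      linear_combination 576 * hs
    have hfac : (τ - 3 * Real.sqrt 3 / (8 * β ^ 2)) * (τ + 3 * Real.sqrt 3 / (8 * β ^ 2)) = 0 := by
      linear_combination hτsq - ha2
    rcases mul_eq_zero.mp hfac with h | h
    · exact Or.inl (by linarith)
    · exact Or.inr (by linarith)
  · rintro ⟨hχ9, hτv⟩
    subst hχ9
    have hτ2 : τ ^ 2 = 27 / (64 * β ^ 4) := by
      rcases hτv with h | h <;> subst h <;>
        · field_simp
          linear_combination 576 * hs
    constructor
    · field_simp
      ring
    · rw [show τ ^ 4 = (τ ^ 2) ^ 2 by ring, hτ2]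
      field_simp
      ring
end
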